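/- Let α ≥ m ≥ 1 be integers and let M = (M_{i,j})_{i,j=0}^{m-1} be a Hankel-type symmetric matrix with M_{i,j} = a_{i+j} if i+j ≤ m-1 and M_{i,j} = 0 if i+j > m-1, where a_{m-1} ≠ 0. Then the polynomials ℛ_j(x) = ((α-1)!/(m-j)!)(x+1)_{m-j} + (j-1)!(x+1)_α Σ_{i=0}^{m-1}((-1)^i M_{j-1,i}/(α+i)!)(x-i+1)_i satisfy deg ℛ_j = α + m - j for each j = 1,...,m, and consequently the Casorati determinant Ω(x) = det(ℛ_i(x-j))_{i,j=1}^m has degree mα. -/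

import Mathlib

open Polynomial Finset

/-- ℛ_j(x) = ((α-1)!/(m-j)!)(x+1)_{m-j}
             + (j-1)!(x+1)_α ∑_{i=0}^{m-1}((-1)^i M_{j-1,i}/(α+i)!)(x-i+1)_i
(here j = j0+1 with j0 : Fin m). -/
noncomputable def calR (α m : ℕ) (M : Matrix (Fin m) (Fin m) ℝ) (j0 : Fin m) : Polynomial ℝ :=
  Polynomial.C ((Nat.factorial (α - 1) : ℝ) / (Nat.factorial (m - 1 - j0))) *
      (ascPochhammer ℝ (m - 1 - (j0 : ℕ))).comp (Polynomial.X + 1)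
    + Polynomial.C ((Nat.factorial j0 : ℝ)) * ((ascPochhammer ℝ α).comp (Polynomial.X + 1)) *
      ∑ i : Fin m, Polynomial.C ((-1) ^ (i : ℕ) * M j0 i / (Nat.factorial (α + i))) *
        (ascPochhammer ℝ (i : ℕ)).comp (Polynomial.X - Polynomial.C (i : ℝ) + 1)

namespace HankelAux

/-! ### Shift and finite-difference operators -/

noncomputable def shiftE : Module.End ℝ (Polynomial ℝ) where
  toFun p := p.comp (X - C 1)
  map_add' p q := add_comp
  map_smul' c p := by simp [smul_comp]

lemma shiftE_apply (p : ℝ[X]) : shiftE p = p.comp (X - C 1) := rfl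

lemma shiftE_pow_apply (s : ℕ) (p : ℝ[X]) : (shiftE ^ s) p = p.comp (X - C (s : ℝ)) := by
  induction s with
  | zero => simp
  | succ s ih =>
    rw [pow_succ', Module.End.mul_apply, ih, shiftE_apply, comp_assoc]
    congr 1
    rw [sub_comp, X_comp, C_comp, Nat.cast_add, Nat.cast_one, C_add]
    ring

lemma natDegree_comp_linear (p : ℝ[X]) (r : ℝ) :
    (p.comp (X - C r)).natDegree = p.natDegree := by
  rw [natDegree_comp, natDegree_X_sub_C, mul_one]

lemma coeff_comp_linear_top (p : ℝ[X]) (r : ℝ) {e : ℕ} (h : p.natDegree ≤ e) :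
    (p.comp (X - C r)).coeff e = p.coeff e := by
  rcases lt_or_eq_of_le h with h | h
  · rw [coeff_eq_zero_of_natDegree_lt ((natDegree_comp_linear p r).trans_lt h),
      coeff_eq_zero_of_natDegree_lt h]
  · subst h
    conv_lhs => rw [← natDegree_comp_linear p r]
    rw [coeff_natDegree, coeff_natDegree,
      leadingCoeff_comp (by rw [natDegree_X_sub_C]; exact one_ne_zero)]
    simp [monic_X_sub_C]

lemma comp_X_sub_one (p : ℝ[X]) : p.comp (X - C 1) = taylor (-1 : ℝ) p := by
  rw [taylor_apply]
  congr 1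
  rw [map_neg, sub_eq_add_neg]

lemma diff_step (p : ℝ[X]) (e : ℕ) (h : p.natDegree ≤ e) :
    (p.comp (X - C 1) - p).natDegree ≤ e - 1 ∧
      (p.comp (X - C 1) - p).coeff (e - 1) = -(e : ℝ) * p.coeff e := by
  by_cases h0 : p.natDegree = 0
  · obtain ⟨c, rfl⟩ := natDegree_eq_zero.mp h0
    simp only [C_comp, sub_self, natDegree_zero, coeff_zero]
    constructor
    · omega
    · rcases Nat.eq_zero_or_pos e with rfl | he
      · simp
      · rw [coeff_C, if_neg (by omega)]
        ring
  · have hp : p ≠ 0 := fun hh => h0 (by simp [hh])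
    have he1 : 1 ≤ e := le_trans (by omega) h
    have hcompdeg : (p.comp (X - C 1)).natDegree = p.natDegree := by
      rw [natDegree_comp, natDegree_X_sub_C, mul_one]
    have hcompne : p.comp (X - C 1) ≠ 0 := by
      intro hh
      rw [hh, natDegree_zero] at hcompdeg
      exact h0 hcompdeg.symm
    have hdeq : (p.comp (X - C 1)).degree = p.degree := by
      rw [degree_eq_natDegree hcompne, degree_eq_natDegree hp, hcompdeg]
    have hdeg : (p.comp (X - C 1) - p).degree < p.degree := by
      have hlc : (p.comp (X - C 1)).leadingCoeff = p.leadingCoeff := by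
        rw [leadingCoeff_comp (by rw [natDegree_X_sub_C]; exact one_ne_zero)]
        rw [leadingCoeff_X_sub_C, one_pow, mul_one]
      have := degree_sub_lt hdeq hcompne hlc
      rwa [hdeq] at this
    have hdegp : p.degree ≤ (e : WithBot ℕ) := le_trans (degree_le_natDegree) (by exact_mod_cast h)
    have hnd : (p.comp (X - C 1) - p).natDegree ≤ e - 1 := by
      by_cases hq : p.comp (X - C 1) - p = 0
      · rw [hq, natDegree_zero]; omega
      · have h1 := (degree_eq_natDegree hq) ▸ (lt_of_lt_of_le hdeg hdegp)
        have : (p.comp (X - C 1) - p).natDegree < e := by exact_mod_cast h1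
        omega
    refine ⟨hnd, ?_⟩
    rcases lt_or_eq_of_le h with hlt | heq
    · rw [coeff_eq_zero_of_natDegree_lt hlt, coeff_eq_zero_of_degree_lt, mul_zero]
      refine lt_of_lt_of_le hdeg (le_trans degree_le_natDegree ?_)
      exact_mod_cast Nat.le_sub_one_of_lt hlt
    · rw [coeff_sub, comp_X_sub_one, taylor_coeff]
      have hh : (hasseDeriv (e - 1) p).natDegree < 2 := by
        have := natDegree_hasseDeriv_le p (e - 1); omega
      rw [eval_eq_sum_range' hh, Finset.sum_range_succ, Finset.sum_range_one,
        hasseDeriv_coeff, hasseDeriv_coeff, Nat.zero_add, show 1 + (e-1) = e by omega,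
        Nat.choose_self, show e.choose (e-1) = e by
          rw [← Nat.choose_symm (by omega : e - 1 ≤ e), show e - (e-1) = 1 by omega,
            Nat.choose_one_right]]
      push_cast
      ring

lemma iter_diff (k : ℕ) (d : ℕ) (hkd : k ≤ d) (p : ℝ[X]) (hp : p.natDegree ≤ d) :
    (((shiftE - 1) ^ k) p).natDegree ≤ d - k ∧
      (((shiftE - 1) ^ k) p).coeff (d - k) =
        (-1 : ℝ) ^ k * (descPochhammer ℝ k).eval (d : ℝ) * p.coeff d := by
  induction k with
  | zero => exact ⟨by simpa using hp, by simp⟩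
  | succ k ih =>
    obtain ⟨h1, h2⟩ := ih (by omega)
    have step : ((shiftE - 1) ^ (k + 1)) p =
        (((shiftE - 1) ^ k) p).comp (X - C 1) - ((shiftE - 1) ^ k) p := by
      rw [pow_succ', Module.End.mul_apply, LinearMap.sub_apply, Module.End.one_apply, shiftE_apply]
    obtain ⟨g1, g2⟩ := diff_step (((shiftE - 1) ^ k) p) (d - k) h1
    constructor
    · rw [step]
      exact g1.trans (by omega)
    · rw [step, show d - (k + 1) = d - k - 1 by omega, g2, h2, descPochhammer_succ_eval]
      have hc : ((d - k : ℕ) : ℝ) = (d : ℝ) - (k : ℝ) := by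
        push_cast [Nat.cast_sub (by omega : k ≤ d)]; ring
      rw [hc]
      ring

lemma shift_sub_pow_expand (k : ℕ) (p : ℝ[X]) :
    shiftE (((shiftE - 1) ^ k) p) =
      ∑ j ∈ range (k + 1),
        C ((-1 : ℝ) ^ (k - j) * (k.choose j : ℝ)) * p.comp (X - C ((j : ℝ) + 1)) := by
  have hc : Commute shiftE (-1 : Module.End ℝ ℝ[X]) := (Commute.one_right shiftE).neg_right
  rw [sub_eq_add_neg, hc.add_pow]
  rw [LinearMap.sum_apply, map_sum]
  refine Finset.sum_congr rfl fun j hj => ?_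
  have hneg : (-1 : Module.End ℝ ℝ[X]) ^ (k - j) = ((-1 : ℝ) ^ (k - j)) • 1 := by
    rw [show (-1 : Module.End ℝ ℝ[X]) = ((-1 : ℝ)) • 1 by
        refine LinearMap.ext fun q => ?_; simp,
      _root_.smul_pow, one_pow]
  rw [Module.End.mul_apply, Module.End.mul_apply, Module.End.natCast_apply, hneg,
    LinearMap.smul_apply, Module.End.one_apply]
  rw [map_smul, map_nsmul, map_smul, map_nsmul]
  have : shiftE ((shiftE ^ j) p) = p.comp (X - C ((j : ℝ) + 1)) := by
    rw [← Module.End.mul_apply, ← pow_succ', shiftE_pow_apply]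
    push_cast; ring_nf
  rw [this, smul_eq_C_mul, ← Nat.cast_smul_eq_nsmul ℝ, smul_eq_C_mul]
  rw [← mul_assoc, ← C_mul]

/-! ### Coefficient of a product, permutation sums -/

lemma coeff_prod_top {ι : Type*} (s : Finset ι) (f : ι → ℝ[X]) (n : ι → ℕ)
    (h : ∀ i ∈ s, (f i).natDegree ≤ n i) :
    (∏ i ∈ s, f i).coeff (∑ i ∈ s, n i) = ∏ i ∈ s, (f i).coeff (n i) := by
  induction s using Finset.cons_induction with
  | empty => simp
  | cons a s ha ih =>
    rw [Finset.prod_cons, Finset.sum_cons,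
      coeff_mul_add_eq_of_natDegree_le (h a (Finset.mem_cons_self a s))
        (le_trans (natDegree_prod_le _ _)
          (Finset.sum_le_sum fun i hi => h i (Finset.mem_cons_of_mem hi))),
      ih fun i hi => h i (Finset.mem_cons_of_mem hi), Finset.prod_cons]

lemma perm_sum (α m : ℕ) (hα : m ≤ α) (σ : Equiv.Perm (Fin m)) :
    ∑ i : Fin m, (α + m - 1 - ((σ i : ℕ)) - (i : ℕ)) = m * α := by
  have h1 : ∀ i : Fin m, α + m - 1 - ((σ i : ℕ)) - (i : ℕ)
      = (α - (σ i : ℕ)) + (m - 1 - (i : ℕ)) := by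
    intro i
    have h2 := (σ i).is_lt
    have h3 := i.is_lt
    omega
  rw [Finset.sum_congr rfl fun i _ => h1 i, Finset.sum_add_distrib,
    Equiv.sum_comp σ (fun j : Fin m => α - (j : ℕ))]
  have h4 : ∑ i : Fin m, (m - 1 - (i : ℕ)) = ∑ i : Fin m, (i : ℕ) := by
    rw [Fin.sum_univ_eq_sum_range (fun j => m - 1 - j), Fin.sum_univ_eq_sum_range (fun j => j),
      ← Finset.sum_range_reflect]
    exact Finset.sum_congr rfl fun j hj => by have := Finset.mem_range.mp hj; omega
  rw [h4, ← Finset.sum_add_distrib,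
    Finset.sum_congr rfl fun (i : Fin m) _ => (show α - (i : ℕ) + (i : ℕ) = α by
      have := i.is_lt; omega)]
  simp [mul_comm]

/-! ### Degree of `calR` -/

lemma lin_eq (r : ℝ) : (X - C r + 1 : ℝ[X]) = X + C (1 - r) := by
  rw [map_sub, map_one]; ring

lemma X_one_eq : (X + 1 : ℝ[X]) = X + C 1 := by rw [map_one]

lemma comp_lin_natDegree (n : ℕ) (c : ℝ) :
    ((ascPochhammer ℝ n).comp (X + C c)).natDegree = n := by
  rw [natDegree_comp, natDegree_X_add_C, mul_one, ascPochhammer_natDegree]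

lemma comp_lin_monic (n : ℕ) (c : ℝ) : ((ascPochhammer ℝ n).comp (X + C c)).Monic :=
  (monic_ascPochhammer ℝ n).comp (monic_X_add_C c) (by rw [natDegree_X_add_C]; exact one_ne_zero)

lemma calR_degree (α m : ℕ) (hm : 1 ≤ m) (hα : m ≤ α) (a : ℕ → ℝ) (ha : a (m - 1) ≠ 0)
    (M : Matrix (Fin m) (Fin m) ℝ)
    (hM : ∀ i j : Fin m, M i j = if (i : ℕ) + (j : ℕ) ≤ m - 1 then a ((i : ℕ) + (j : ℕ)) else 0)
    (j0 : Fin m) :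
    (calR α m M j0).degree = ((α + m - 1 - (j0 : ℕ) : ℕ) : WithBot ℕ) := by
  have hj0 : (j0 : ℕ) < m := j0.is_lt
  set b : ℕ := m - 1 - (j0 : ℕ) with hb
  have hbm : b < m := by omega
  set S : ℝ[X] := ∑ i : Fin m, C ((-1) ^ (i : ℕ) * M j0 i / (Nat.factorial (α + i))) *
        (ascPochhammer ℝ (i : ℕ)).comp (X - C (i : ℝ) + 1) with hS
  have hvanish : ∀ i : Fin m, b < (i : ℕ) →
      C ((-1) ^ (i : ℕ) * M j0 i / (Nat.factorial (α + i))) *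
        (ascPochhammer ℝ (i : ℕ)).comp (X - C (i : ℝ) + 1) = 0 := by
    intro i hi
    rw [hM, if_neg (by omega)]
    simp
  have hSdeg : S.natDegree ≤ b := by
    apply natDegree_sum_le_of_forall_le
    intro i _
    rcases le_or_gt (i : ℕ) b with hib | hib
    · refine le_trans (natDegree_C_mul_le _ _) ?_
      rw [lin_eq, comp_lin_natDegree]
      exact hib
    · rw [hvanish i hib, natDegree_zero]
      exact Nat.zero_le _
  have hw : ((-1 : ℝ)) ^ b * a (m - 1) / (Nat.factorial (α + b)) ≠ 0 := by
    apply div_ne_zero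
    · exact mul_ne_zero (pow_ne_zero _ (by norm_num)) ha
    · exact_mod_cast Nat.factorial_ne_zero _
  have hScoeff : S.coeff b = (-1 : ℝ) ^ b * a (m - 1) / (Nat.factorial (α + b)) := by
    rw [hS, finset_sum_coeff]
    rw [Finset.sum_eq_single (⟨b, hbm⟩ : Fin m)]
    · rw [coeff_C_mul, lin_eq]
      have h1 : ((ascPochhammer ℝ b).comp (X + C (1 - (b : ℝ)))).coeff b = 1 := by
        have h3 := (comp_lin_monic b (1 - (b : ℝ))).coeff_natDegree
        rwa [comp_lin_natDegree] at h3
      rw [h1, mul_one, hM, if_pos (by omega : (j0 : ℕ) + b ≤ m - 1),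
        show (j0 : ℕ) + b = m - 1 by omega]
    · intro i _ hib
      rcases lt_or_ge b (i : ℕ) with h | h
      · rw [hvanish i h, coeff_zero]
      · have hlt : (i : ℕ) < b := by
          rcases lt_or_eq_of_le h with h' | h'
          · exact h'
          · exact absurd (Fin.ext h' : i = ⟨b, hbm⟩) hib
        rw [coeff_C_mul, lin_eq,
          coeff_eq_zero_of_natDegree_lt (by rw [comp_lin_natDegree]; exact hlt), mul_zero]
    · intro h
      exact absurd (Finset.mem_univ _) h
  have hSne : S ≠ 0 := by
    intro h
    rw [h, coeff_zero] at hScoeff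
    exact hw hScoeff.symm
  have hSdeg' : S.natDegree = b := le_antisymm hSdeg (le_natDegree_of_ne_zero (hScoeff ▸ hw))
  have hc2 : ((Nat.factorial (j0 : ℕ) : ℝ)) ≠ 0 := by exact_mod_cast Nat.factorial_ne_zero _
  set B : ℝ[X] := (ascPochhammer ℝ α).comp (X + 1) with hB
  have hBm : B.Monic := by rw [hB, X_one_eq]; exact comp_lin_monic α 1
  have hBdeg : B.natDegree = α := by rw [hB, X_one_eq]; exact comp_lin_natDegree α 1
  set Q : ℝ[X] := C ((Nat.factorial (j0 : ℕ) : ℝ)) * B * S with hQ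
  have hCne : C ((Nat.factorial (j0 : ℕ) : ℝ)) ≠ 0 := by
    rw [Ne, C_eq_zero]; exact hc2
  have hQne : Q ≠ 0 := mul_ne_zero (mul_ne_zero hCne hBm.ne_zero) hSne
  have hQdeg : Q.natDegree = α + b := by
    rw [hQ, natDegree_mul (mul_ne_zero hCne hBm.ne_zero) hSne,
      natDegree_mul hCne hBm.ne_zero, natDegree_C, hBdeg, hSdeg']
    omega
  have hP1lt : (C ((Nat.factorial (α - 1) : ℝ) / (Nat.factorial b)) *
      (ascPochhammer ℝ b).comp (X + 1)).degree < Q.degree := by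
    have hP1deg : (C ((Nat.factorial (α - 1) : ℝ) / (Nat.factorial b)) *
        (ascPochhammer ℝ b).comp (X + 1)).natDegree ≤ b :=
      (natDegree_C_mul_le _ _).trans (le_of_eq (by rw [X_one_eq]; exact comp_lin_natDegree b 1))
    rw [degree_eq_natDegree hQne, hQdeg]
    calc (C ((Nat.factorial (α - 1) : ℝ) / (Nat.factorial b)) *
        (ascPochhammer ℝ b).comp (X + 1)).degree
        ≤ ((C ((Nat.factorial (α - 1) : ℝ) / (Nat.factorial b)) *
        (ascPochhammer ℝ b).comp (X + 1)).natDegree : WithBot ℕ) := degree_le_natDegree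
      _ ≤ (b : WithBot ℕ) := by exact_mod_cast hP1deg
      _ < ((α + b : ℕ) : WithBot ℕ) := by exact_mod_cast (show b < α + b by omega)
  have hcal : calR α m M j0 = C ((Nat.factorial (α - 1) : ℝ) / (Nat.factorial b)) *
      (ascPochhammer ℝ b).comp (X + 1) + Q := rfl
  rw [hcal, degree_add_eq_right_of_degree_lt hP1lt, degree_eq_natDegree hQne, hQdeg]
  congr 1
  omega

lemma units_smul_poly (u : ℤˣ) (p : ℝ[X]) : u • p = (((u : ℤ) : ℝ)) • p := by
  rw [Units.smul_def, ← Int.cast_smul_eq_zsmul ℝ]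

end HankelAux

/-- For the Hankel-type matrix M_{i,j} = a_{i+j} (i+j ≤ m-1), 0 otherwise, with
a_{m-1} ≠ 0: deg ℛ_j = α + m - j for all j, and the Casorati determinant
Ω(x) = det(ℛ_i(x-j)) has degree mα. -/
theorem hankel_casorati_degree (α m : ℕ) (hm : 1 ≤ m) (hα : m ≤ α)
    (a : ℕ → ℝ) (ha : a (m - 1) ≠ 0)
    (M : Matrix (Fin m) (Fin m) ℝ)
    (hM : ∀ i j : Fin m, M i j = if (i : ℕ) + (j : ℕ) ≤ m - 1 then a ((i : ℕ) + (j : ℕ)) else 0) :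
    (∀ j0 : Fin m, (calR α m M j0).degree = ((α + m - 1 - (j0 : ℕ) : ℕ) : WithBot ℕ)) ∧
    (Matrix.det (Matrix.of fun i j : Fin m =>
        (calR α m M i).comp (Polynomial.X - Polynomial.C ((j : ℝ) + 1)))).degree
      = ((m * α : ℕ) : WithBot ℕ) := by
  have hdegR : ∀ j0 : Fin m, (calR α m M j0).degree = ((α + m - 1 - (j0 : ℕ) : ℕ) : WithBot ℕ) :=
    fun j0 => HankelAux.calR_degree α m hm hα a ha M hM j0
  refine ⟨hdegR, ?_⟩
  have hRnat : ∀ i : Fin m, (calR α m M i).natDegree = α + m - 1 - (i : ℕ) := fun i =>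
    natDegree_eq_of_degree_eq_some (hdegR i)
  have hRcoeff : ∀ i : Fin m, (calR α m M i).coeff (α + m - 1 - (i : ℕ)) ≠ 0 := fun i =>
    coeff_ne_zero_of_eq_degree (hdegR i)
  set N : Matrix (Fin m) (Fin m) ℝ[X] :=
    Matrix.of fun i j : Fin m => (calR α m M i).comp (X - C ((j : ℝ) + 1)) with hNdef
  set U : Matrix (Fin m) (Fin m) ℝ[X] :=
    Matrix.of fun j k : Fin m => if (j : ℕ) ≤ (k : ℕ) then
      C ((-1 : ℝ) ^ ((k : ℕ) - (j : ℕ)) * (((k : ℕ).choose (j : ℕ) : ℝ))) else 0 with hUdef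
  have hUtri : U.BlockTriangular id := by
    intro j k hjk
    exact if_neg (by exact Nat.not_le.mpr hjk)
  have hUdet : U.det = 1 := by
    rw [Matrix.det_of_upperTriangular hUtri]
    refine Finset.prod_eq_one fun j _ => ?_
    simp [hUdef]
  have hNU : N.det = (N * U).det := by rw [Matrix.det_mul, hUdet, mul_one]
  have hEntry : ∀ i k : Fin m, (N * U) i k
      = HankelAux.shiftE (((HankelAux.shiftE - 1) ^ (k : ℕ)) (calR α m M i)) := by
    intro i k
    rw [HankelAux.shift_sub_pow_expand, Matrix.mul_apply]
    simp only [hNdef, hUdef, Matrix.of_apply]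
    rw [Fin.sum_univ_eq_sum_range (fun j =>
      (calR α m M i).comp (X - C ((j : ℝ) + 1)) *
        (if j ≤ (k : ℕ) then
          C ((-1 : ℝ) ^ ((k : ℕ) - j) * (((k : ℕ).choose j : ℝ))) else 0))]
    rw [← Finset.sum_subset (Finset.range_subset_range.mpr (show (k : ℕ) + 1 ≤ m from k.is_lt))
      (fun j _ hj => by
        have hgt : ¬ (j ≤ (k : ℕ)) := fun hle => hj (Finset.mem_range.mpr (by omega))
        rw [if_neg hgt, mul_zero])]
    refine Finset.sum_congr rfl fun j hj => ?_
    rw [if_pos (by have := Finset.mem_range.mp hj; omega), mul_comm]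
  set w : Fin m → Fin m → ℕ := fun i k => α + m - 1 - (i : ℕ) - (k : ℕ) with hwdef
  have hkd : ∀ i k : Fin m, (k : ℕ) ≤ α + m - 1 - (i : ℕ) := by
    intro i k
    have := i.is_lt; have := k.is_lt
    omega
  have hiter := fun (i k : Fin m) =>
    HankelAux.iter_diff (k : ℕ) (α + m - 1 - (i : ℕ)) (hkd i k) (calR α m M i)
      (le_of_eq (hRnat i))
  have hbound : ∀ i k : Fin m, ((N * U) i k).natDegree ≤ w i k := by
    intro i k
    rw [hEntry i k, HankelAux.shiftE_apply, HankelAux.natDegree_comp_linear]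
    exact (hiter i k).1
  have hcoeffE : ∀ i k : Fin m, ((N * U) i k).coeff (w i k)
      = (-1 : ℝ) ^ (k : ℕ) *
          (descPochhammer ℝ (k : ℕ)).eval (((α + m - 1 - (i : ℕ) : ℕ)) : ℝ) *
          (calR α m M i).coeff (α + m - 1 - (i : ℕ)) := by
    intro i k
    rw [hEntry i k, HankelAux.shiftE_apply, HankelAux.coeff_comp_linear_top _ _ (hiter i k).1]
    exact (hiter i k).2
  -- coefficient of the determinant at degree m * α
  have hdetcoeff : ((N * U).det).coeff (m * α)
      = (Matrix.of fun i k : Fin m => ((N * U) i k).coeff (w i k)).det := by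
    rw [Matrix.det_apply, finset_sum_coeff, Matrix.det_apply]
    refine Finset.sum_congr rfl fun σ _ => ?_
    have hsum : ∑ i : Fin m, w (σ i) i = m * α := HankelAux.perm_sum α m hα σ
    rw [HankelAux.units_smul_poly, Polynomial.coeff_smul, ← hsum,
      HankelAux.coeff_prod_top univ _ _ (fun i _ => hbound (σ i) i)]
    rw [Units.smul_def, Int.cast_smul_eq_zsmul ℝ]
    rfl
  -- upper bound on the degree
  have hub : ((N * U).det).natDegree ≤ m * α := by
    rw [Matrix.det_apply]
    refine natDegree_sum_le_of_forall_le _ _ fun σ _ => ?_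
    rw [HankelAux.units_smul_poly]
    refine le_trans (natDegree_smul_le _ _) ?_
    refine le_trans (natDegree_prod_le _ _) ?_
    rw [← HankelAux.perm_sum α m hα σ]
    exact Finset.sum_le_sum fun i _ => hbound (σ i) i
  -- the coefficient matrix has nonzero determinant
  have hcne : ((N * U).det).coeff (m * α) ≠ 0 := by
    rw [hdetcoeff]
    have hfact : (Matrix.of fun i k : Fin m => ((N * U) i k).coeff (w i k))
        = Matrix.of fun i k : Fin m => ((-1 : ℝ) ^ (k : ℕ)) *
            ((Matrix.of fun i' k' : Fin m =>
              ((calR α m M i').coeff (α + m - 1 - (i' : ℕ))) *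
                ((Matrix.of fun i'' k'' : Fin m => (descPochhammer ℝ (k'' : ℕ)).eval
                  (((α + m - 1 - (i'' : ℕ) : ℕ)) : ℝ)) i' k')) i k) := by
      ext i k
      simp only [Matrix.of_apply]
      rw [hcoeffE i k]
      ring
    rw [hfact, Matrix.det_mul_row, Matrix.det_mul_column]
    have hvdm := Matrix.det_eval_matrixOfPolynomials_eq_det_vandermonde
      (fun i : Fin m => (((α + m - 1 - (i : ℕ) : ℕ)) : ℝ))
      (fun k : Fin m => descPochhammer ℝ (k : ℕ))
      (fun k => descPochhammer_natDegree ℝ (k : ℕ))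
      (fun k => monic_descPochhammer ℝ (k : ℕ))
    rw [← hvdm]
    refine mul_ne_zero ?_ (mul_ne_zero ?_ ?_)
    · exact Finset.prod_ne_zero_iff.mpr fun k _ => pow_ne_zero _ (by norm_num)
    · exact Finset.prod_ne_zero_iff.mpr fun i _ => hRcoeff i
    · refine Matrix.det_vandermonde_ne_zero_iff.mpr ?_
      intro i j hij
      have hi := i.is_lt; have hj := j.is_lt
      have : (α + m - 1 - (i : ℕ) : ℕ) = (α + m - 1 - (j : ℕ) : ℕ) := by
        have hij' : ((α + m - 1 - (i : ℕ) : ℕ) : ℝ) = ((α + m - 1 - (j : ℕ) : ℕ) : ℝ) := hij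
        exact_mod_cast hij'
      exact Fin.ext (by omega)
  have hdetne : (N * U).det ≠ 0 := fun h => hcne (by rw [h, coeff_zero])
  have hnat : (N * U).det.natDegree = m * α := le_antisymm hub (le_natDegree_of_ne_zero hcne)
  rw [hNU, degree_eq_natDegree hdetne, hnat]
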